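/- arXiv:2004.13961 — 4 statements merged into one kernel-verified Lean document; each statement's English description precedes it below -/
import Mathlib

section
/- For all natural numbers j, k, the integral over [−1,1] of φ'_j(x)·φ'_k(x) equals (4j+6) if j = k and 0 otherwise. In particular, the one-dimensional Legendre–Galerkin stiffness matrix with constant coefficient is diagonal. -/
open Polynomial MeasureTheory intervalIntegral Finset

/-- The `n`-th Legendre polynomial, defined by `L_0 = 1`, `L_1 = X`, and the
three-term recurrence `(n+1) L_{n+1} = (2n+1) X L_n - n L_{n-1}`. -/
noncomputable def legendre : ℕ → Polynomial ℝ
  | 0 => 1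
  | 1 => Polynomial.X
  | (n+2) =>
      Polynomial.C ((2*(n:ℝ)+3)/((n:ℝ)+2)) * (Polynomial.X * legendre (n+1))
        - Polynomial.C (((n:ℝ)+1)/((n:ℝ)+2)) * legendre n

lemma legendre_zero : legendre 0 = 1 := rfl
lemma legendre_one : legendre 1 = X := rfl

lemma legendre_two' (n : ℕ) : legendre (n+2) =
    C ((2*(n:ℝ)+3)/((n:ℝ)+2)) * (X * legendre (n+1))
      - C (((n:ℝ)+1)/((n:ℝ)+2)) * legendre n := rfl

lemma rec_eval (n : ℕ) (x : ℝ) :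
    ((n:ℝ)+2) * (legendre (n+2)).eval x
      = (2*(n:ℝ)+3) * (x * (legendre (n+1)).eval x) - ((n:ℝ)+1) * (legendre n).eval x := by
  have h2 : ((n:ℝ)+2) ≠ 0 := by positivity
  rw [legendre_two']
  simp only [eval_sub, eval_mul, eval_C, eval_X]
  field_simp

lemma d_rec (n : ℕ) (x : ℝ) :
    ((n:ℝ)+2) * ((legendre (n+2)).derivative).eval x
      = (2*(n:ℝ)+3) * ((legendre (n+1)).eval x + x * ((legendre (n+1)).derivative).eval x)
        - ((n:ℝ)+1) * ((legendre n).derivative).eval x := by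
  have h2 : ((n:ℝ)+2) ≠ 0 := by positivity
  rw [legendre_two']
  simp only [derivative_sub, derivative_mul, derivative_C, derivative_X, zero_mul, zero_add,
    one_mul, eval_sub, eval_add, eval_mul, eval_C, eval_X]
  field_simp

lemma AB (n : ℕ) (x : ℝ) :
    ((legendre (n+1)).derivative.eval x
        = x * (legendre n).derivative.eval x + ((n:ℝ)+1) * (legendre n).eval x)
    ∧ (x * (legendre (n+1)).derivative.eval x
        = (legendre n).derivative.eval x + ((n:ℝ)+1) * (legendre (n+1)).eval x) := by
  induction n with
  | zero => constructor <;> simp [legendre]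
  | succ n ih =>
    obtain ⟨hA, hB⟩ := ih
    have h2 : ((n:ℝ)+2) ≠ 0 := by positivity
    have hA1 : (legendre (n+2)).derivative.eval x
        = x * (legendre (n+1)).derivative.eval x + ((n:ℝ)+2) * (legendre (n+1)).eval x := by
      apply mul_left_cancel₀ h2
      linear_combination d_rec n x + ((n:ℝ)+1) * hB
    refine ⟨by push_cast; linear_combination hA1, ?_⟩
    apply mul_left_cancel₀ h2
    push_cast
    linear_combination x * d_rec n x + (2*(n:ℝ)+3) * x * hB - ((n:ℝ)+2) * rec_eval n x
      - ((n:ℝ)+2) * hA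

lemma dD (n : ℕ) (x : ℝ) :
    (legendre (n+2)).derivative.eval x
      = (legendre n).derivative.eval x + (2*(n:ℝ)+3) * (legendre (n+1)).eval x := by
  have h1 := (AB (n+1) x).1
  have h0 := (AB n x).2
  push_cast at h1
  linear_combination h1 + h0

lemma legendre_eval_one (n : ℕ) : (legendre n).eval 1 = 1 := by
  induction n using Nat.strong_induction_on with
  | _ n ih =>
    match n with
    | 0 => simp [legendre]
    | 1 => simp [legendre]
    | (m+2) =>
      have h1 := ih (m+1) (by omega)
      have h0 := ih m (by omega)
      have h2 : ((m:ℝ)+2) ≠ 0 := by positivity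
      apply mul_left_cancel₀ h2
      linear_combination rec_eval m 1 + (2*(m:ℝ)+3) * h1 - ((m:ℝ)+1) * h0

lemma legendre_eval_neg_one (n : ℕ) : (legendre n).eval (-1) = (-1)^n := by
  induction n using Nat.strong_induction_on with
  | _ n ih =>
    match n with
    | 0 => simp [legendre]
    | 1 => simp [legendre]
    | (m+2) =>
      have h1 := ih (m+1) (by omega)
      have h0 := ih m (by omega)
      have h2 : ((m:ℝ)+2) ≠ 0 := by positivity
      apply mul_left_cancel₀ h2
      rw [pow_succ, pow_succ]
      linear_combination rec_eval m (-1) - (2*(m:ℝ)+3) * h1 - ((m:ℝ)+1) * h0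

noncomputable def Jint (p : Polynomial ℝ) : ℝ := ∫ x in (-1:ℝ)..1, p.eval x

lemma Jint_add (p q : Polynomial ℝ) : Jint (p + q) = Jint p + Jint q := by
  simp only [Jint, eval_add]
  exact integral_add (p.continuous.intervalIntegrable _ _) (q.continuous.intervalIntegrable _ _)

lemma Jint_sub (p q : Polynomial ℝ) : Jint (p - q) = Jint p - Jint q := by
  simp only [Jint, eval_sub]
  exact integral_sub (p.continuous.intervalIntegrable _ _) (q.continuous.intervalIntegrable _ _)

lemma Jint_Cmul (a : ℝ) (p : Polynomial ℝ) : Jint (C a * p) = a * Jint p := by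
  simp only [Jint, eval_mul, eval_C]
  exact integral_const_mul a _

lemma Jint_derivative (p : Polynomial ℝ) :
    Jint (derivative p) = p.eval 1 - p.eval (-1) := by
  have : Jint (derivative p) = ∫ x in (-1:ℝ)..1, deriv (fun y => p.eval y) x := by
    simp only [Jint]
    congr 1
    ext x
    rw [Polynomial.deriv]
  rw [this]
  apply integral_deriv_eq_sub
  · intro x _; exact p.differentiableAt
  · rw [show (deriv fun y => p.eval y) = fun x => p.derivative.eval x from funext fun x => p.deriv]
    exact (p.derivative.continuous.intervalIntegrable _ _)

lemma Jint_legendre (m : ℕ) : Jint (legendre m) = if m = 0 then 2 else 0 := by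
  match m with
  | 0 =>
    simp only [Jint, legendre, eval_one, if_pos rfl]
    norm_num
  | (n+1) =>
    have h3 : (2*(n:ℝ)+3) ≠ 0 := by positivity
    have hD : (C (2*(n:ℝ)+3) : Polynomial ℝ) * legendre (n+1)
        = derivative (legendre (n+2)) - derivative (legendre n) := by
      apply Polynomial.funext
      intro x
      simp only [eval_mul, eval_C, eval_sub]
      linear_combination - dD n x
    have : (2*(n:ℝ)+3) * Jint (legendre (n+1)) = 0 := by
      rw [← Jint_Cmul, hD, ← derivative_sub, Jint_derivative]
      simp [legendre_eval_one, legendre_eval_neg_one, pow_succ]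
    simp only [Nat.succ_ne_zero, if_false]
    exact (mul_eq_zero.mp this).resolve_left h3

lemma ortho (n : ℕ) : ∀ m : ℕ,
    (2*(n:ℝ)+1) * Jint (legendre m * legendre n) = if m = n then 2 else 0 := by
  induction n using Nat.strong_induction_on with
  | _ n ih =>
    match n with
    | 0 =>
      intro m
      rw [legendre_zero, mul_one, Jint_legendre]
      push_cast
      by_cases h : m = 0 <;> simp [h]
    | 1 =>
      intro m
      match m with
      | 0 =>
        rw [legendre_zero, one_mul, show (legendre 1 : Polynomial ℝ) = legendre 1 from rfl,
          Jint_legendre]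
        simp
      | (p+1) =>
        have key : (2*(p:ℝ)+3) * Jint (legendre (p+1) * legendre 1)
            = ((p:ℝ)+2) * Jint (legendre (p+2)) + ((p:ℝ)+1) * Jint (legendre p) := by
          rw [← Jint_Cmul, ← Jint_Cmul, ← Jint_Cmul, ← Jint_add]
          congr 1
          apply Polynomial.funext
          intro x
          simp only [eval_mul, eval_add, eval_C, legendre_one, eval_X]
          linear_combination - rec_eval p x
        rw [Jint_legendre, Jint_legendre] at key
        match p with
        | 0 =>
          norm_num at key ⊢
          linear_combination key
        | (q+1) =>
          norm_num at key
          have hJ : Jint (legendre (q+2) * legendre 1) = 0 := by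
            rcases key with h | h
            · exact absurd h (by positivity)
            · exact h
          rw [show q+1+1 = q+2 from rfl, hJ]
          rw [if_neg (by omega)]
          ring
    | (n+2) =>
      have ih1 : ∀ m : ℕ, (2*(n:ℝ)+3) * Jint (legendre m * legendre (n+1))
          = if m = n+1 then 2 else 0 := by
        intro m
        have h := ih (n+1) (by omega) m
        push_cast at h
        linear_combination h
      have ih0 := ih n (by omega)
      have h2 : ((n:ℝ)+2) ≠ 0 := by positivity
      have h3 : (2*(n:ℝ)+3) ≠ 0 := by positivity
      have h1 : (2*(n:ℝ)+1) ≠ 0 := by positivity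
      intro m
      match m with
      | 0 =>
        have key : ((n:ℝ)+2) * Jint (legendre 0 * legendre (n+2))
            = (2*(n:ℝ)+3) * Jint (legendre 1 * legendre (n+1))
              - ((n:ℝ)+1) * Jint (legendre 0 * legendre n) := by
          rw [← Jint_Cmul, ← Jint_Cmul, ← Jint_Cmul, ← Jint_sub]
          congr 1
          apply Polynomial.funext
          intro x
          simp only [eval_mul, eval_sub, eval_C, legendre_zero, legendre_one, eval_X, eval_one]
          linear_combination rec_eval n x
        have hJ : Jint (legendre 0 * legendre (n+2)) = 0 := by
          apply (mul_eq_zero.mp _).resolve_left h2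
          by_cases hn : n = 0
          · subst hn
            rw [key]
            have e1 := ih1 1
            have e0 := ih0 0
            rw [if_pos rfl] at e1
            rw [if_pos rfl] at e0
            push_cast at e1 e0 ⊢
            linear_combination e1 - e0
          · rw [key]
            have e1 := ih1 1
            have e0 := ih0 0
            rw [if_neg (by omega)] at e1
            rw [if_neg (by omega)] at e0
            have j1 : Jint (legendre 1 * legendre (n+1)) = 0 :=
              (mul_eq_zero.mp e1).resolve_left h3
            have j0 : Jint (legendre 0 * legendre n) = 0 :=
              (mul_eq_zero.mp e0).resolve_left h1
            rw [j1, j0]; ring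
        rw [hJ, if_neg (by omega)]
        ring
      | (p+1) =>
        have hp3 : (2*(p:ℝ)+3) ≠ 0 := by positivity
        have key : ((n:ℝ)+2) * ((2*(p:ℝ)+3) * Jint (legendre (p+1) * legendre (n+2)))
            = (2*(n:ℝ)+3) * (((p:ℝ)+2) * Jint (legendre (p+2) * legendre (n+1)))
              + (2*(n:ℝ)+3) * (((p:ℝ)+1) * Jint (legendre p * legendre (n+1)))
              - ((n:ℝ)+1) * ((2*(p:ℝ)+3) * Jint (legendre (p+1) * legendre n)) := by
          rw [← Jint_Cmul, ← Jint_Cmul, ← Jint_Cmul, ← Jint_Cmul, ← Jint_Cmul, ← Jint_Cmul,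
            ← Jint_Cmul, ← Jint_Cmul, ← Jint_add, ← Jint_sub]
          congr 1
          apply Polynomial.funext
          intro x
          simp only [eval_mul, eval_sub, eval_add, eval_C]
          linear_combination (2*(p:ℝ)+3) * (legendre (p+1)).eval x * rec_eval n x
            - (2*(n:ℝ)+3) * (legendre (n+1)).eval x * rec_eval p x
        by_cases hpn : p = n+1
        · -- diagonal case
          subst hpn
          have hA : Jint (legendre (n+1+2) * legendre (n+1)) = 0 := by
            have := ih1 (n+3)
            rw [if_neg (by omega)] at this
            exact (mul_eq_zero.mp this).resolve_left h3
          have hB := ih1 (n+1)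
          rw [if_pos rfl] at hB
          have hC : Jint (legendre (n+1+1) * legendre n) = 0 := by
            have := ih0 (n+2)
            rw [if_neg (by omega)] at this
            exact (mul_eq_zero.mp this).resolve_left h1
          rw [show n+1+2 = n+3 from rfl] at key
          rw [hA, hC] at key
          rw [if_pos rfl]
          push_cast at key ⊢
          apply mul_left_cancel₀ h2
          linear_combination key + ((n:ℝ)+2) * hB
        · by_cases hp1n : p + 1 = n
          · -- p+1 = n case : cancellation
            have hA := ih1 (p+2)
            rw [if_pos (by omega)] at hA
            have hB : Jint (legendre p * legendre (n+1)) = 0 := by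
              have := ih1 p
              rw [if_neg (by omega)] at this
              exact (mul_eq_zero.mp this).resolve_left h3
            have hC := ih0 (p+1)
            rw [if_pos (by omega)] at hC
            have hJ : Jint (legendre (p+1) * legendre (n+2)) = 0 := by
              apply (mul_eq_zero.mp _).resolve_left (mul_ne_zero h2 hp3)
              rw [← mul_assoc] at key
              rw [key, hB]
              have hn : (n:ℝ) = (p:ℝ) + 1 := by
                have : ((p:ℝ))+1 = n := by exact_mod_cast congrArg (Nat.cast : ℕ → ℝ) hp1n
                linarith
              rw [hn] at hA hC ⊢
              linear_combination ((p:ℝ)+2) * hA - ((p:ℝ)+2) * hC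
            rw [hJ, if_neg (by omega)]
            ring
          · -- generic zero case
            have hA : Jint (legendre (p+2) * legendre (n+1)) = 0 := by
              have := ih1 (p+2)
              rw [if_neg (by omega)] at this
              exact (mul_eq_zero.mp this).resolve_left h3
            have hB : Jint (legendre p * legendre (n+1)) = 0 := by
              have := ih1 p
              rw [if_neg (by omega)] at this
              exact (mul_eq_zero.mp this).resolve_left h3
            have hC : Jint (legendre (p+1) * legendre n) = 0 := by
              have := ih0 (p+1)
              rw [if_neg (by omega)] at this
              exact (mul_eq_zero.mp this).resolve_left h1
            have hJ : Jint (legendre (p+1) * legendre (n+2)) = 0 := by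
              apply (mul_eq_zero.mp _).resolve_left (mul_ne_zero h2 hp3)
              rw [← mul_assoc] at key
              rw [key, hA, hB, hC]
              ring
            rw [hJ, if_neg (by omega)]
            ring

/-- The Legendre–Galerkin Dirichlet basis function `φ_k = L_k - L_{k+2}`. -/
noncomputable def phi (k : ℕ) : Polynomial ℝ := legendre k - legendre (k+2)

lemma phi_deriv_eval (j : ℕ) (x : ℝ) :
    ((phi j).derivative).eval x = -(2*(j:ℝ)+3) * (legendre (j+1)).eval x := by
  simp only [phi, derivative_sub, eval_sub]
  linarith [dD j x]

theorem stiffness_diagonal (j k : ℕ) :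
    (∫ x in (-1:ℝ)..1, ((phi j).derivative).eval x * ((phi k).derivative).eval x)
      = if j = k then 4*(j:ℝ)+6 else 0 := by
  have hid : (phi j).derivative * (phi k).derivative
      = C (2*(j:ℝ)+3) * (C (2*(k:ℝ)+3) * (legendre (j+1) * legendre (k+1))) := by
    apply Polynomial.funext
    intro x
    simp only [eval_mul, eval_C]
    rw [phi_deriv_eval j x, phi_deriv_eval k x]
    ring
  have hJ : (∫ x in (-1:ℝ)..1, ((phi j).derivative).eval x * ((phi k).derivative).eval x)
      = Jint ((phi j).derivative * (phi k).derivative) := by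
    simp only [Jint, eval_mul]
  rw [hJ, hid, Jint_Cmul, Jint_Cmul]
  have ho := ortho (k+1) (j+1)
  push_cast at ho
  by_cases h : j = k
  · subst h
    rw [if_pos rfl] at ho ⊢
    linear_combination (2*(j:ℝ)+3) * ho
  · have hk3 : (2*((k:ℝ)+1)+1) ≠ 0 := by positivity
    rw [if_neg (by omega)] at ho
    have : Jint (legendre (j+1) * legendre (k+1)) = 0 :=
      (mul_eq_zero.mp ho).resolve_left hk3
    rw [this, if_neg h]
    ring
end

section
/- For all natural numbers j, k, the integral over [−1,1] of φ_j(x)·φ_k(x) equals 2/(2j+1) + 2/(2j+5) if k = j, equals −2/(2j+5) if k = j+2, equals −2/(2k+5) if j = k+2, and equals 0 otherwise. In particular, the one-dimensional Legendre–Galerkin mass matrix is pentadiagonal with zero first off-diagonals. -/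
open Polynomial MeasureTheory intervalIntegral Finset

lemma legendre_rec (n : ℕ) : ((n:ℝ[X]) + 2) * legendre (n+2)
    = (2*(n:ℝ[X])+3) * (X * legendre (n+1)) - ((n:ℝ[X])+1) * legendre n := by
  have h : ((n:ℝ)+2) ≠ 0 := by positivity
  have e2 : C ((n:ℝ)+2) = ((n:ℝ[X]) + 2) := by simp [map_add, map_natCast, map_ofNat]
  have t1 : C ((n:ℝ)+2) * (C ((2*(n:ℝ)+3)/((n:ℝ)+2)) * (X * legendre (n+1)))
      = C (2*(n:ℝ)+3) * (X * legendre (n+1)) := by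
    rw [← mul_assoc, ← C_mul, mul_div_cancel₀ _ h]
  have t2 : C ((n:ℝ)+2) * (C (((n:ℝ)+1)/((n:ℝ)+2)) * legendre n)
      = C ((n:ℝ)+1) * legendre n := by
    rw [← mul_assoc, ← C_mul, mul_div_cancel₀ _ h]
  show ((n:ℝ[X]) + 2) * (C ((2*(n:ℝ)+3)/((n:ℝ)+2)) * (X * legendre (n+1))
        - C (((n:ℝ)+1)/((n:ℝ)+2)) * legendre n) = _
  rw [← e2, mul_sub, t1, t2]
  simp [map_add, map_natCast, map_ofNat, map_mul]

lemma natCast_add_ne_zero (n k : ℕ) : ((n:ℝ[X]) + (k+1:ℕ)) ≠ 0 := by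
  have h : ((n:ℝ) + (k+1:ℕ)) ≠ 0 := by positivity
  have := Polynomial.C_ne_zero.mpr h
  simpa [map_add, map_natCast] using this

lemma legendre_AB (n : ℕ) :
    derivative (legendre (n+1)) = X * derivative (legendre n) + ((n:ℝ[X])+1) * legendre n
    ∧ X * derivative (legendre (n+1)) = derivative (legendre n) + ((n:ℝ[X])+1) * legendre (n+1) := by
  induction n with
  | zero => constructor <;> simp [legendre]
  | succ n ih =>
    obtain ⟨hA, hB⟩ := ih
    have hrec := legendre_rec n
    have hdrec := congrArg derivative hrec
    simp only [derivative_mul, derivative_add, derivative_natCast, derivative_ofNat,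
      derivative_sub, derivative_X, derivative_one, zero_mul, mul_zero, zero_add, add_zero,
      one_mul, mul_one, zero_sub, zero_mul] at hdrec
    have hne : ((n:ℝ[X]) + 2) ≠ 0 := by simpa using natCast_add_ne_zero n 1
    constructor
    · apply mul_left_cancel₀ hne
      push_cast
      linear_combination hdrec + ((n:ℝ[X])+1) * hB
    · apply mul_left_cancel₀ hne
      push_cast
      linear_combination (X:ℝ[X]) * hdrec - ((n:ℝ[X])+2) * hrec
        + (2*(n:ℝ[X])+3) * X * hB - ((n:ℝ[X])+2) * hA

lemma legendre_ode (n : ℕ) :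
    derivative ((1 - X^2) * derivative (legendre n))
      = -((n:ℝ[X]) * ((n:ℝ[X])+1)) * legendre n := by
  cases n with
  | zero => simp [legendre]
  | succ n =>
    obtain ⟨hA, hB⟩ := legendre_AB n
    have e : (1 - X^2) * derivative (legendre (n+1))
        = -(((n:ℝ[X])+1) * (X * legendre (n+1) - legendre n)) := by
      linear_combination - (X:ℝ[X]) * hB + hA
    rw [e]
    simp only [derivative_neg, derivative_mul, derivative_add, derivative_natCast,
      derivative_sub, derivative_X, derivative_one, zero_mul, zero_add, add_zero, one_mul,
      mul_zero]
    push_cast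
    linear_combination -(((n:ℝ[X])+1)) * hB - ((n:ℝ[X])+1) * X * hB + ((n:ℝ[X])+1) * X * hB

open MeasureTheory intervalIntegral

noncomputable def pint (p : ℝ[X]) : ℝ := ∫ x in (-1:ℝ)..1, p.eval x

lemma pint_deriv (p : ℝ[X]) : pint (derivative p) = p.eval 1 - p.eval (-1) := by
  apply intervalIntegral.integral_eq_sub_of_hasDerivAt (fun x _ => p.hasDerivAt x)
  exact (Polynomial.continuous _).intervalIntegrable _ _

lemma pint_add (p q : ℝ[X]) : pint (p + q) = pint p + pint q := by
  unfold pint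
  simp only [eval_add]
  exact integral_add ((Polynomial.continuous p).intervalIntegrable _ _)
    ((Polynomial.continuous q).intervalIntegrable _ _)

lemma pint_sub (p q : ℝ[X]) : pint (p - q) = pint p - pint q := by
  unfold pint
  simp only [eval_sub]
  exact integral_sub ((Polynomial.continuous p).intervalIntegrable _ _)
    ((Polynomial.continuous q).intervalIntegrable _ _)

lemma pint_C_mul (a : ℝ) (p : ℝ[X]) : pint (C a * p) = a * pint p := by
  unfold pint
  simp only [eval_mul, eval_C]
  exact integral_const_mul a _

lemma legendre_or926 {m n : ℕ} (h : m ≠ n) : pint (legendre m * legendre n) = 0 := by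
  have hm := legendre_ode m
  have hn := legendre_ode n
  set A := (1-X^2) * derivative (legendre m) with hA
  set B := (1-X^2) * derivative (legendre n) with hB
  set W := A * legendre n - B * legendre m with hWdef
  have hAB : A * derivative (legendre n) = B * derivative (legendre m) := by
    rw [hA, hB]; ring
  have hW : derivative W
      = C ((n:ℝ) * ((n:ℝ)+1) - (m:ℝ) * ((m:ℝ)+1)) * (legendre m * legendre n) := by
    simp only [map_sub, map_mul, map_add, map_natCast, map_one]
    simp only [hWdef, derivative_sub, derivative_mul]
    linear_combination (legendre n) * hm - (legendre m) * hn + hAB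
  have h0 : pint (derivative W) = 0 := by
    rw [pint_deriv]
    simp [hWdef, hA, hB]
  rw [hW, pint_C_mul] at h0
  have hc : (n:ℝ) * ((n:ℝ)+1) - (m:ℝ) * ((m:ℝ)+1) ≠ 0 := by
    rcases h.lt_or_gt with h | h
    · have : (m:ℝ) + 1 ≤ (n:ℝ) := by exact_mod_cast h
      have hm0 : (0:ℝ) ≤ m := Nat.cast_nonneg m
      nlinarith
    · have : (n:ℝ) + 1 ≤ (m:ℝ) := by exact_mod_cast h
      have hn0 : (0:ℝ) ≤ n := Nat.cast_nonneg n
      nlinarith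
  exact (mul_eq_zero.mp h0).resolve_left hc

lemma legendre_sq_step (n : ℕ) :
    (2*(n:ℝ)+5) * pint (legendre (n+2) * legendre (n+2))
      = (2*(n:ℝ)+3) * pint (legendre (n+1) * legendre (n+1)) := by
  have h1 := legendre_rec n
  have h2 := legendre_rec (n+1)
  push_cast at h2
  have key : C ((2*(n:ℝ)+5)*((n:ℝ)+2)) * (legendre (n+2) * legendre (n+2))
      = C ((2*(n:ℝ)+3)*((n:ℝ)+3)) * (legendre (n+1) * legendre (n+3))
        + C ((2*(n:ℝ)+3)*((n:ℝ)+2)) * (legendre (n+1) * legendre (n+1))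
        - C ((2*(n:ℝ)+5)*((n:ℝ)+1)) * (legendre n * legendre (n+2)) := by
    simp only [map_mul, map_add, map_natCast, map_ofNat, map_one]
    linear_combination (2*(n:ℝ[X])+5) * legendre (n+2) * h1
      - (2*(n:ℝ[X])+3) * legendre (n+1) * h2
  have hpk := congrArg pint key
  simp only [pint_sub, pint_add, pint_C_mul,
    legendre_or926 (by omega : n+1 ≠ n+3), legendre_or926 (by omega : n ≠ n+2)] at hpk
  have hne : ((n:ℝ)+2) ≠ 0 := by positivity
  apply mul_left_cancel₀ hne
  linear_combination hpk

lemma legendre_sq : ∀ n : ℕ, pint (legendre n * legendre n) = 2/(2*(n:ℝ)+1) := by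
  intro n
  induction n using Nat.strong_induction_on with
  | _ n ih =>
    match n with
    | 0 =>
      simp [pint, legendre]
      norm_num
    | 1 =>
      have : pint (legendre 1 * legendre 1) = ∫ x in (-1:ℝ)..1, x^2 := by
        simp [pint, legendre, sq]
      rw [this]
      simp [integral_pow]
      norm_num
    | (k+2) =>
      have hs := legendre_sq_step k
      rw [ih (k+1) (by omega)] at hs
      push_cast at hs ⊢
      have h3 : (2*(k:ℝ)+3) ≠ 0 := by positivity
      have h5 : (2*(k:ℝ)+5) ≠ 0 := by positivity
      field_simp at hs
      rw [eq_div_iff (by positivity : 2*((k:ℝ)+2)+1 ≠ 0)]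
      apply mul_right_cancel₀ h3
      linear_combination hs

lemma legendre_J (m n : ℕ) :
    pint (legendre m * legendre n) = if m = n then 2/(2*(m:ℝ)+1) else 0 := by
  by_cases h : m = n
  · subst h; rw [if_pos rfl]; exact legendre_sq m
  · rw [if_neg h]; exact legendre_or926 h


theorem mass_pentadiagonal (j k : ℕ) :
    (∫ x in (-1:ℝ)..1, (phi j).eval x * (phi k).eval x)
      = if k = j then 2/(2*(j:ℝ)+1) + 2/(2*(j:ℝ)+5)
        else if k = j + 2 then -(2/(2*(j:ℝ)+5))
        else if j = k + 2 then -(2/(2*(k:ℝ)+5))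
        else 0 := by
  have lhs : (∫ x in (-1:ℝ)..1, (phi j).eval x * (phi k).eval x) = pint (phi j * phi k) := by
    simp [pint, eval_mul]
  rw [lhs]
  have expand : phi j * phi k
      = (legendre j * legendre k - legendre j * legendre (k+2))
        - (legendre (j+2) * legendre k - legendre (j+2) * legendre (k+2)) := by
    unfold phi; ring
  rw [expand, pint_sub, pint_sub, pint_sub, legendre_J, legendre_J, legendre_J, legendre_J]
  by_cases h1 : k = j
  · subst h1
    simp only [if_pos rfl, if_neg (by omega : ¬ k = k+2), if_neg (by omega : ¬ k+2 = k)]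
    push_cast; ring
  · by_cases h2 : k = j + 2
    · subst h2
      simp only [if_neg h1, if_pos rfl, if_neg (by omega : ¬ j = j+2),
        if_neg (by omega : ¬ j = j+2+2), if_neg (by omega : ¬ j+2 = j+2+2)]
      push_cast; ring
    · by_cases h3 : j = k + 2
      · subst h3
        simp only [if_neg h1, if_neg h2, if_pos rfl, if_neg (by omega : ¬ k+2 = k),
          if_neg (by omega : ¬ k+2+2 = k), if_neg (by omega : ¬ k+2+2 = k+2)]
        push_cast; ring
      · simp only [if_neg h1, if_neg h2, if_neg h3, if_neg (show ¬ j = k by omega),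
          if_neg (show ¬ j = k+2 from h3), if_neg (show ¬ j+2 = k by omega),
          if_neg (show ¬ j+2 = k+2 by omega)]
        ring
end

section
/- For all natural numbers m, n, k, if m + n + k is odd, or if k > m + n, or if m > n + k, or if n > m + k, then the integral over [−1,1] of L_m(x)·L_n(x)·L_k(x) equals 0. -/
open Polynomial MeasureTheory intervalIntegral Finset

lemma legendre_natDegree_le (n : ℕ) : (legendre n).natDegree ≤ n := by
  induction n using Nat.twoStepInduction with
  | zero => simp [legendre]
  | one => simp [legendre]
  | more n ih1 ih2 =>
    rw [legendre]
    refine le_trans (natDegree_sub_le _ _) ?_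
    simp only [max_le_iff]
    constructor
    · refine le_trans (natDegree_C_mul_le _ _) ?_
      refine le_trans (natDegree_mul_le) ?_
      simp only [natDegree_X]
      omega
    · exact le_trans (natDegree_C_mul_le _ _) (le_trans ih1 (by omega))

lemma legendre_eval_neg (n : ℕ) (x : ℝ) :
    (legendre n).eval (-x) = (-1)^n * (legendre n).eval x := by
  induction n using Nat.twoStepInduction generalizing x with
  | zero => simp [legendre]
  | one => simp [legendre]
  | more n ih1 ih2 =>
    simp only [legendre, eval_sub, eval_mul, eval_C, eval_X, ih1, ih2]
    ring

/-- Closed form for the moment `∫ x^(k+2i) L_k`. -/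
noncomputable def momG (i k : ℕ) : ℝ :=
  2^(k+1) * (Nat.factorial (k+2*i)) * (Nat.factorial (k+i))
    / ((Nat.factorial (2*k+2*i+1)) * (Nat.factorial i))

/-- The moment `∫_{-1}^1 x^j L_k(x) dx`. -/
noncomputable def momM (j k : ℕ) : ℝ := ∫ x in (-1:ℝ)..1, x^j * (legendre k).eval x

lemma integrable_aux (j k : ℕ) (a b : ℝ) :
    IntervalIntegrable (fun x : ℝ => x^j * (legendre k).eval x) volume a b :=
  ((continuous_pow j).mul (legendre k).continuous).intervalIntegrable a b

lemma momM_odd (j k : ℕ) (h : Odd (j + k)) : momM j k = 0 := by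
  have key : ∀ x : ℝ, (-x)^j * (legendre k).eval (-x) = -(x^j * (legendre k).eval x) := by
    intro x
    rw [legendre_eval_neg, neg_pow]
    have : (-1:ℝ)^j * (-1:ℝ)^k = -1 := by
      rw [← pow_add]
      exact Odd.neg_one_pow h
    calc (-1)^j * x^j * ((-1)^k * (legendre k).eval x)
        = ((-1:ℝ)^j * (-1)^k) * (x^j * (legendre k).eval x) := by ring
      _ = -(x^j * (legendre k).eval x) := by rw [this]; ring
  have h1 : momM j k = ∫ x in (-1:ℝ)..1, (-x)^j * (legendre k).eval (-x) := by
    rw [momM]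
    rw [intervalIntegral.integral_comp_neg (fun x => x^j * (legendre k).eval x)]
    norm_num
  have h2 : (∫ x in (-1:ℝ)..1, (-x)^j * (legendre k).eval (-x))
      = ∫ x in (-1:ℝ)..1, -(x^j * (legendre k).eval x) :=
    intervalIntegral.integral_congr fun x _ => key x
  have h3 : momM j k = -momM j k := by
    calc momM j k = ∫ x in (-1:ℝ)..1, (-x)^j * (legendre k).eval (-x) := h1
      _ = ∫ x in (-1:ℝ)..1, -(x^j * (legendre k).eval x) := h2
      _ = -∫ x in (-1:ℝ)..1, x^j * (legendre k).eval x := intervalIntegral.integral_neg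
      _ = -momM j k := by rw [momM]
  linarith

lemma momM_rec (j n : ℕ) :
    momM j (n+2) = (2*(n:ℝ)+3)/((n:ℝ)+2) * momM (j+1) (n+1)
      - ((n:ℝ)+1)/((n:ℝ)+2) * momM j n := by
  have : ∀ x : ℝ, x^j * (legendre (n+2)).eval x
      = (2*(n:ℝ)+3)/((n:ℝ)+2) * (x^(j+1) * (legendre (n+1)).eval x)
        - ((n:ℝ)+1)/((n:ℝ)+2) * (x^j * (legendre n).eval x) := by
    intro x
    simp only [legendre, eval_sub, eval_mul, eval_C, eval_X]
    ring
  rw [momM, intervalIntegral.integral_congr fun x _ => this x]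
  rw [intervalIntegral.integral_sub
      (((integrable_aux (j+1) (n+1) _ _)).const_mul _)
      (((integrable_aux j n _ _)).const_mul _),
    intervalIntegral.integral_const_mul, intervalIntegral.integral_const_mul]
  rfl

lemma fact_ne (m : ℕ) : (Nat.factorial m : ℝ) ≠ 0 :=
  Nat.cast_ne_zero.mpr (Nat.factorial_ne_zero m)

lemma fact_succ (m : ℕ) : (Nat.factorial (m+1) : ℝ) = ((m:ℝ)+1) * Nat.factorial m := by
  rw [Nat.factorial_succ]; push_cast; ring

lemma fact_shift (a b : ℕ) (h : a = b + 1) :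
    (Nat.factorial a : ℝ) = ((b:ℝ)+1) * Nat.factorial b := by subst h; exact fact_succ b

lemma momG_identA (i n : ℕ) :
    ((n:ℝ)+2) * momG i (n+2) = (2*(n:ℝ)+3) * momG (i+1) (n+1) - ((n:ℝ)+1) * momG (i+1) n := by
  simp only [momG]
  rw [fact_shift ((n+2)+2*i) (n+1+2*i) (by ring),
      fact_shift (n+1+2*i) (n+2*i) (by ring),
      fact_shift ((n+2)+i) (n+1+i) (by ring),
      fact_shift (2*(n+2)+2*i+1) (2*n+2*i+4) (by ring),
      fact_shift (2*n+2*i+4) (2*n+2*i+3) (by ring),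
      fact_shift ((n+1)+2*(i+1)) (n+2+2*i) (by ring),
      fact_shift (n+2+2*i) (n+1+2*i) (by ring),
      fact_shift (n+1+2*i) (n+2*i) (by ring),
      fact_shift ((n+1)+(i+1)) (n+1+i) (by ring),
      fact_shift (2*(n+1)+2*(i+1)+1) (2*n+2*i+4) (by ring),
      fact_shift (2*n+2*i+4) (2*n+2*i+3) (by ring),
      fact_shift (n+2*(i+1)) (n+1+2*i) (by ring),
      fact_shift (n+1+2*i) (n+2*i) (by ring),
      fact_shift (n+(i+1)) (n+i) (by ring),
      fact_shift (2*n+2*(i+1)+1) (2*n+2*i+2) (by ring),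
      fact_shift (2*n+2*i+2) (2*n+2*i+1) (by ring),
      fact_shift (i+1) i (by ring),
      fact_shift (n+1+i) (n+i) (by ring),
      fact_shift (2*n+2*i+3) (2*n+2*i+2) (by ring),
      fact_shift (2*n+2*i+2) (2*n+2*i+1) (by ring)]
  have h1 := fact_ne (n+2*i)
  have h2 := fact_ne (n+i)
  have h3 := fact_ne (2*n+2*i+1)
  have h4 := fact_ne i
  push_cast
  rw [pow_succ, pow_succ, pow_succ]
  field_simp
  ring

lemma momG_identB (n : ℕ) :
    (2*(n:ℝ)+3) * momG 0 (n+1) = ((n:ℝ)+1) * momG 0 n := by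
  simp only [momG]
  rw [fact_shift ((n+1)+2*0) n (by ring),
      fact_shift (2*(n+1)+2*0+1) (2*n+2) (by ring),
      fact_shift (2*n+2) (2*n+1) (by ring),
      show 2*n+2*0+1 = 2*n+1 by ring]
  have h1 := fact_ne n
  have h2 := fact_ne (2*n+1)
  have h4 := fact_ne 0
  push_cast
  rw [pow_succ]
  field_simp
  ring

lemma integral_pow_symm (j : ℕ) :
    (∫ x in (-1:ℝ)..1, x^j) = (1 - (-1:ℝ)^(j+1))/(j+1) := by
  rw [integral_pow]
  norm_num

lemma momM_eq (k : ℕ) :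
    (∀ i, momM (k+2*i) k = momG i k) ∧ (∀ j, j < k → momM j k = 0) := by
  induction k using Nat.twoStepInduction with
  | zero =>
    refine ⟨fun i => ?_, fun j hj => by omega⟩
    have h0 : momM (0+2*i) 0 = (∫ x in (-1:ℝ)..1, x^(2*i)) := by
      rw [momM]
      refine intervalIntegral.integral_congr fun x _ => ?_
      simp [legendre]
    rw [h0, integral_pow_symm]
    have : (-1:ℝ)^(2*i+1) = -1 := Odd.neg_one_pow ⟨i, by ring⟩
    rw [this]
    simp only [momG]
    rw [fact_shift (2*0+2*i+1) (2*i) (by ring), show (0:ℕ)+2*i = 2*i from by ring,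
      show (0:ℕ)+i = i from by ring]
    have h1 := fact_ne (2*i)
    have h2 := fact_ne i
    push_cast
    field_simp
    ring
  | one =>
    refine ⟨fun i => ?_, fun j hj => ?_⟩
    · have h0 : momM (1+2*i) 1 = (∫ x in (-1:ℝ)..1, x^(2*i+2)) := by
        rw [momM]
        refine intervalIntegral.integral_congr fun x _ => ?_
        simp only [legendre, eval_X]
        ring
      rw [h0, integral_pow_symm]
      have : (-1:ℝ)^(2*i+2+1) = -1 := Odd.neg_one_pow ⟨i+1, by ring⟩
      rw [this]
      simp only [momG]
      rw [fact_shift (1+2*i) (2*i) (by ring),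
          fact_shift (1+i) i (by ring),
          fact_shift (2*1+2*i+1) (2*i+2) (by ring),
          fact_shift (2*i+2) (2*i+1) (by ring),
          fact_shift (2*i+1) (2*i) (by ring)]
      have h1 := fact_ne (2*i)
      have h2 := fact_ne i
      push_cast
      field_simp
      ring
    · interval_cases j
      exact momM_odd 0 1 ⟨0, by ring⟩
  | more n ih1 ih2 =>
    constructor
    · intro i
      rw [momM_rec]
      rw [show (n+2)+2*i+1 = (n+1)+2*(i+1) by ring, ih2.1 (i+1)]
      rw [show (n+2)+2*i = n+2*(i+1) by ring, ih1.1 (i+1)]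
      have hA := momG_identA i n
      have hn : ((n:ℝ)+2) ≠ 0 := by positivity
      rw [div_mul_eq_mul_div, div_mul_eq_mul_div, div_sub_div_same, eq_comm, eq_div_iff hn]
      linear_combination hA
    · intro j hj
      rcases lt_trichotomy j n with hlt | heq | hgt
      · rw [momM_rec, ih2.2 (j+1) (by omega), ih1.2 j hlt]
        ring
      · subst heq
        have e1 : momM (j+1) (j+1) = momG 0 (j+1) := by simpa using ih2.1 0
        have e2 : momM j j = momG 0 j := by simpa using ih1.1 0
        rw [momM_rec, e1, e2]
        have hB := momG_identB j
        have hn : ((j:ℝ)+2) ≠ 0 := by positivity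
        rw [div_mul_eq_mul_div, div_mul_eq_mul_div, div_sub_div_same, _root_.div_eq_zero_iff]
        left
        linear_combination hB
      · have hj' : j = n+1 := by omega
        subst hj'
        exact momM_odd (n+1) (n+2) ⟨n+1, by ring⟩

lemma momM_lt (j k : ℕ) (h : j < k) : momM j k = 0 := (momM_eq k).2 j h

lemma integral_poly_mul_legendre (p : Polynomial ℝ) (k : ℕ) (h : p.natDegree < k) :
    (∫ x in (-1:ℝ)..1, p.eval x * (legendre k).eval x) = 0 := by
  have hev : ∀ x : ℝ, p.eval x * (legendre k).eval x
      = ∑ j ∈ Finset.range (p.natDegree + 1), p.coeff j * (x^j * (legendre k).eval x) := by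
    intro x
    rw [eval_eq_sum_range, Finset.sum_mul]
    exact Finset.sum_congr rfl fun j _ => by ring
  rw [intervalIntegral.integral_congr fun x _ => hev x]
  rw [intervalIntegral.integral_finset_sum
    (fun j _ => (integrable_aux j k _ _).const_mul _)]
  refine Finset.sum_eq_zero fun j hj => ?_
  rw [intervalIntegral.integral_const_mul]
  have : momM j k = 0 := momM_lt j k (by
    simp only [Finset.mem_range] at hj
    omega)
  rw [momM] at this
  rw [this, mul_zero]

theorem legendre_triple_product_vanish (m n k : ℕ)
    (h : Odd (m + n + k) ∨ m + n < k ∨ n + k < m ∨ m + k < n) :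
    (∫ x in (-1:ℝ)..1,
      (legendre m).eval x * (legendre n).eval x * (legendre k).eval x) = 0 := by
  rcases h with h | h | h | h
  · -- parity case
    set f : ℝ → ℝ := fun x => (legendre m).eval x * (legendre n).eval x * (legendre k).eval x
      with hf
    have key : ∀ x : ℝ, f (-x) = -(f x) := by
      intro x
      simp only [hf, legendre_eval_neg]
      have : (-1:ℝ)^m * (-1:ℝ)^n * (-1:ℝ)^k = -1 := by
        rw [← pow_add, ← pow_add]
        exact Odd.neg_one_pow h
      calc (-1:ℝ)^m * (legendre m).eval x * ((-1)^n * (legendre n).eval x)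
            * ((-1)^k * (legendre k).eval x)
          = ((-1:ℝ)^m * (-1)^n * (-1)^k)
            * ((legendre m).eval x * (legendre n).eval x * (legendre k).eval x) := by ring
        _ = -((legendre m).eval x * (legendre n).eval x * (legendre k).eval x) := by
            rw [this]; ring
    have h1 : (∫ x in (-1:ℝ)..1, f x) = ∫ x in (-1:ℝ)..1, f (-x) := by
      rw [intervalIntegral.integral_comp_neg f]
      norm_num
    have h2 : (∫ x in (-1:ℝ)..1, f (-x)) = ∫ x in (-1:ℝ)..1, -(f x) :=
      intervalIntegral.integral_congr fun x _ => key x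
    have h3 : (∫ x in (-1:ℝ)..1, f x) = -∫ x in (-1:ℝ)..1, f x :=
      calc (∫ x in (-1:ℝ)..1, f x) = ∫ x in (-1:ℝ)..1, f (-x) := h1
        _ = ∫ x in (-1:ℝ)..1, -(f x) := h2
        _ = -∫ x in (-1:ℝ)..1, f x := intervalIntegral.integral_neg
    linarith
  · have hdeg : (legendre m * legendre n).natDegree < k :=
      lt_of_le_of_lt (le_trans natDegree_mul_le
        (Nat.add_le_add (legendre_natDegree_le m) (legendre_natDegree_le n))) h
    have := integral_poly_mul_legendre (legendre m * legendre n) k hdeg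
    rw [show (∫ x in (-1:ℝ)..1,
        (legendre m).eval x * (legendre n).eval x * (legendre k).eval x)
      = ∫ x in (-1:ℝ)..1, (legendre m * legendre n).eval x * (legendre k).eval x from
      intervalIntegral.integral_congr fun x _ => by simp only [eval_mul]]
    exact this
  · have hdeg : (legendre n * legendre k).natDegree < m :=
      lt_of_le_of_lt (le_trans natDegree_mul_le
        (Nat.add_le_add (legendre_natDegree_le n) (legendre_natDegree_le k))) h
    have := integral_poly_mul_legendre (legendre n * legendre k) m hdeg
    rw [show (∫ x in (-1:ℝ)..1,
        (legendre m).eval x * (legendre n).eval x * (legendre k).eval x)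
      = ∫ x in (-1:ℝ)..1, (legendre n * legendre k).eval x * (legendre m).eval x from
      intervalIntegral.integral_congr fun x _ => by simp only [eval_mul]; ring]
    exact this
  · have hdeg : (legendre m * legendre k).natDegree < n :=
      lt_of_le_of_lt (le_trans natDegree_mul_le
        (Nat.add_le_add (legendre_natDegree_le m) (legendre_natDegree_le k))) h
    have := integral_poly_mul_legendre (legendre m * legendre k) n hdeg
    rw [show (∫ x in (-1:ℝ)..1,
        (legendre m).eval x * (legendre n).eval x * (legendre k).eval x)
      = ∫ x in (-1:ℝ)..1, (legendre m * legendre k).eval x * (legendre n).eval x from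
      intervalIntegral.integral_congr fun x _ => by simp only [eval_mul]; ring]
    exact this
end

section
/- For all natural numbers m ≥ n, the leading coefficient formula holds: writing L_m·L_n in the Legendre basis as Σ_{s=0}^{n} c_s·L_{m+n−2s}, the coefficient of the top term L_{m+n} is c_0 = C_m·C_n/C_{m+n}, where C_r = (1·3·…·(2r−1))/(r!·2^r). In particular c_0 > 0. -/
open Polynomial MeasureTheory intervalIntegral Finset

/-- `C_r = (1·3·…·(2r-1)) / (r! · 2^r)`, with `C_0 = 1`. -/
noncomputable def Ccoef (r : ℕ) : ℝ :=
  (∏ i ∈ Finset.range r, (2*(i:ℝ)+1)) / ((r.factorial : ℝ) * 2^r)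

noncomputable def Lead (r : ℕ) : ℝ :=
  (∏ i ∈ Finset.range r, (2*(i:ℝ)+1)) / (r.factorial : ℝ)

lemma prod_pos (r : ℕ) : 0 < ∏ i ∈ Finset.range r, (2*(i:ℝ)+1) :=
  Finset.prod_pos fun i _ => by positivity

lemma Ccoef_pos (r : ℕ) : 0 < Ccoef r := by
  unfold Ccoef
  have := prod_pos r
  have : (0:ℝ) < (r.factorial : ℝ) := by exact_mod_cast r.factorial_pos
  positivity

lemma Lead_pos (r : ℕ) : 0 < Lead r := by
  unfold Lead
  have := prod_pos r
  have : (0:ℝ) < (r.factorial : ℝ) := by exact_mod_cast r.factorial_pos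
  positivity

lemma Lead_eq (r : ℕ) : Lead r = 2^r * Ccoef r := by
  unfold Lead Ccoef
  have h2 : (2:ℝ)^r ≠ 0 := by positivity
  have hf : ((r.factorial : ℝ)) ≠ 0 := by
    exact_mod_cast r.factorial_ne_zero
  field_simp

lemma leg_natDegree_le : ∀ r, (legendre r).natDegree ≤ r
  | 0 => by simp [legendre]
  | 1 => by simp [legendre]
  | (n+2) => by
    have h1 := leg_natDegree_le (n+1)
    have h0 := leg_natDegree_le n
    rw [legendre]
    refine le_trans (natDegree_sub_le _ _) (max_le ?_ ?_)
    · refine le_trans (natDegree_C_mul_le _ _) ?_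
      refine le_trans (natDegree_mul_le) ?_
      simpa [natDegree_X] using by omega
    · refine le_trans (natDegree_C_mul_le _ _) (by omega)

lemma leg_coeff : ∀ r, (legendre r).coeff r = Lead r
  | 0 => by simp [legendre, Lead]
  | 1 => by simp [legendre, Lead]
  | (n+2) => by
    have h1 := leg_coeff (n+1)
    have h0 : (legendre n).coeff (n+2) = 0 :=
      coeff_eq_zero_of_natDegree_lt (lt_of_le_of_lt (leg_natDegree_le n) (by omega))
    rw [legendre]
    rw [coeff_sub, coeff_C_mul, coeff_C_mul, h0, mul_zero, sub_zero]
    have hx : (Polynomial.X * legendre (n+1)).coeff (n+2) = (legendre (n+1)).coeff (n+1) := by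
      rw [Polynomial.coeff_X_mul]
    rw [hx, h1]
    have hstep : Lead (n+2) = (2*(n:ℝ)+3)/((n:ℝ)+2) * Lead (n+1) := by
      unfold Lead
      rw [show n+2 = (n+1)+1 from rfl, Finset.prod_range_succ, Nat.factorial_succ (n+1)]
      have hf : ((n+1).factorial : ℝ) ≠ 0 := by exact_mod_cast (n+1).factorial_ne_zero
      have hn2 : ((n:ℝ)+2) ≠ 0 := by positivity
      push_cast
      field_simp
      ring
    rw [hstep]

lemma leg_natDegree (r : ℕ) : (legendre r).natDegree = r := by
  refine le_antisymm (leg_natDegree_le r) ?_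
  apply le_natDegree_of_ne_zero
  rw [leg_coeff]
  exact (Lead_pos r).ne'

theorem linearization_leading_coeff (m n : ℕ) (hmn : n ≤ m) :
    (legendre m * legendre n).coeff (m + n)
        = (Ccoef m * Ccoef n / Ccoef (m+n)) * (legendre (m+n)).coeff (m+n) ∧
      0 < Ccoef m * Ccoef n / Ccoef (m+n) := by
  constructor
  · have key : (legendre m * legendre n).coeff (m + n)
        = (legendre m).leadingCoeff * (legendre n).leadingCoeff := by
      have := Polynomial.coeff_mul_degree_add_degree (legendre m) (legendre n)
      rwa [leg_natDegree, leg_natDegree] at this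
    rw [key]
    rw [Polynomial.leadingCoeff, Polynomial.leadingCoeff, leg_natDegree, leg_natDegree,
      leg_coeff, leg_coeff, leg_coeff, Lead_eq, Lead_eq, Lead_eq]
    have hC := (Ccoef_pos (m+n)).ne'
    field_simp
    ring
  · have h1 := Ccoef_pos m
    have h2 := Ccoef_pos n
    have h3 := Ccoef_pos (m+n)
    positivity
end
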